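/- For n = 2, the linear map sending a vector V ∈ ℝ² to the trilinear form A_V(X,Y,Z) = ⟨X,Y⟩⟨V,Z⟩ − ⟨V,Y⟩⟨X,Z⟩ on ℝ² (where ⟨·,·⟩ is the standard inner product) is a linear isomorphism from ℝ² onto the space of all trilinear forms A on ℝ² satisfying A(X,V,W) + A(X,W,V) = 0 for all X, V, W. -/

import Mathlib

open RealInnerProductSpace

/-- The space `𝒜^g` of possible difference tensors between a metric connection and the
Levi-Civita connection: trilinear forms `A` on `ℝⁿ` satisfying
`A(X,V,W) + A(X,W,V) = 0` for all `X, V, W`. -/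
noncomputable def metricDifferenceTensors (n : ℕ) :
    Submodule ℝ (MultilinearMap ℝ (fun _ : Fin 3 => EuclideanSpace ℝ (Fin n)) ℝ) where
  carrier := {A | ∀ X V W, A ![X, V, W] + A ![X, W, V] = 0}
  add_mem' := by
    intro a b ha hb X V W
    have h1 := ha X V W
    have h2 := hb X V W
    simp only [MultilinearMap.add_apply]
    linarith
  zero_mem' := by intro X V W; simp
  smul_mem' := by
    intro c a ha X V W
    have h := ha X V W
    simp only [MultilinearMap.smul_apply, smul_eq_mul, ← mul_add, h, mul_zero]

noncomputable def AVmap (n : ℕ) (V : EuclideanSpace ℝ (Fin n)) :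
    MultilinearMap ℝ (fun _ : Fin 3 => EuclideanSpace ℝ (Fin n)) ℝ where
  toFun f := ⟪f 0, f 1⟫ * ⟪V, f 2⟫ - ⟪V, f 1⟫ * ⟪f 0, f 2⟫
  map_update_add' := by
    intro inst f i x y
    have : inst = instDecidableEqFin 3 := Subsingleton.elim _ _
    subst this
    fin_cases i <;>
      simp [Function.update_apply, inner_add_left, inner_add_right] <;> ring
  map_update_smul' := by
    intro inst f i c x
    have : inst = instDecidableEqFin 3 := Subsingleton.elim _ _
    subst this
    fin_cases i <;>
      simp [Function.update_apply, inner_smul_left, inner_smul_right] <;> ring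

lemma AVmap_apply {n : ℕ} (V X Y Z : EuclideanSpace ℝ (Fin n)) :
    AVmap n V ![X, Y, Z] = ⟪X, Y⟫ * ⟪V, Z⟫ - ⟪V, Y⟫ * ⟪X, Z⟫ := by
  simp [AVmap]

lemma fin3_eta {E : Type*} (g : Fin 3 → E) : g = ![g 0, g 1, g 2] := by
  funext i; fin_cases i <;> rfl

noncomputable def AVlin : EuclideanSpace ℝ (Fin 2) →ₗ[ℝ] metricDifferenceTensors 2 where
  toFun V := ⟨AVmap 2 V, by
    intro X W1 W2
    rw [AVmap_apply, AVmap_apply]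
    ring⟩
  map_add' V W := by
    apply Subtype.ext
    apply MultilinearMap.ext
    intro f
    simp [AVmap, inner_add_left]
    ring
  map_smul' c V := by
    apply Subtype.ext
    apply MultilinearMap.ext
    intro f
    simp [AVmap, inner_smul_left]
    ring

lemma fin2_cases (j : Fin 2) : j = 0 ∨ j = 1 := by omega

/-- For `n = 2`, the linear map `V ↦ A_V` with
`A_V(X,Y,Z) = ⟨X,Y⟩⟨V,Z⟩ − ⟨V,Y⟩⟨X,Z⟩` is a linear isomorphism from `ℝ²` onto the space
of trilinear forms on `ℝ²` antisymmetric in the last two arguments. -/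
theorem vectorialTorsion_linearEquiv_dim2 :
    ∃ e : EuclideanSpace ℝ (Fin 2) ≃ₗ[ℝ] metricDifferenceTensors 2,
      ∀ (V X Y Z : EuclideanSpace ℝ (Fin 2)),
        (e V : MultilinearMap ℝ (fun _ : Fin 3 => EuclideanSpace ℝ (Fin 2)) ℝ) ![X, Y, Z]
          = ⟪X, Y⟫ * ⟪V, Z⟫ - ⟪V, Y⟫ * ⟪X, Z⟫ := by
  set e0 : EuclideanSpace ℝ (Fin 2) := EuclideanSpace.single 0 1 with he0
  set e1 : EuclideanSpace ℝ (Fin 2) := EuclideanSpace.single 1 1 with he1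
  have hinj : Function.Injective AVlin := by
    rw [injective_iff_map_eq_zero]
    intro V hV
    have h1 : AVmap 2 V ![e0, e0, e1] = 0 := by
      have := congrArg (fun A : metricDifferenceTensors 2 =>
        (A : MultilinearMap ℝ (fun _ : Fin 3 => EuclideanSpace ℝ (Fin 2)) ℝ) ![e0, e0, e1]) hV
      simpa [AVlin] using this
    have h2 : AVmap 2 V ![e1, e0, e1] = 0 := by
      have := congrArg (fun A : metricDifferenceTensors 2 =>
        (A : MultilinearMap ℝ (fun _ : Fin 3 => EuclideanSpace ℝ (Fin 2)) ℝ) ![e1, e0, e1]) hV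
      simpa [AVlin] using this
    rw [AVmap_apply] at h1 h2
    simp [he0, he1, EuclideanSpace.inner_single_left, EuclideanSpace.inner_single_right,
      EuclideanSpace.single_apply] at h1 h2
    ext i
    rcases fin2_cases i with h | h <;> subst h <;> simp [h1, h2]
  have hsurj : Function.Surjective AVlin := by
    rintro ⟨A, hA⟩
    have hz : ∀ X W, A ![X, W, W] = 0 := by
      intro X W; have := hA X W W; linarith
    have hswap : ∀ X, A ![X, e1, e0] = -A ![X, e0, e1] := by
      intro X; have := hA X e0 e1; linarith
    set a : ℝ := A ![e0, e0, e1] with ha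
    set b : ℝ := A ![e1, e0, e1] with hb
    refine ⟨EuclideanSpace.single 1 a - EuclideanSpace.single 0 b, ?_⟩
    apply Subtype.ext
    show AVmap 2 _ = A
    apply Module.Basis.ext_multilinear (fun _ => (EuclideanSpace.basisFun (Fin 2) ℝ).toBasis)
    intro v
    rw [fin3_eta (fun i => (EuclideanSpace.basisFun (Fin 2) ℝ).toBasis (v i))]
    simp only [OrthonormalBasis.coe_toBasis, EuclideanSpace.basisFun_apply]
    rcases fin2_cases (v 0) with h0 | h0 <;> rcases fin2_cases (v 1) with h1 | h1 <;>
      rcases fin2_cases (v 2) with h2 | h2 <;> rw [h0, h1, h2] <;>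
      rw [AVmap_apply] <;>
      simp only [← he0, ← he1] <;>
      (first
        | (rw [hz]; simp [he0, he1, EuclideanSpace.inner_single_left,
            EuclideanSpace.inner_single_right, EuclideanSpace.single_apply])
        | (rw [hswap]; simp [he0, he1, ← ha, ← hb, EuclideanSpace.inner_single_left,
            EuclideanSpace.inner_single_right, EuclideanSpace.single_apply])
        | simp [he0, he1, ← ha, ← hb, EuclideanSpace.inner_single_left,
            EuclideanSpace.inner_single_right, EuclideanSpace.single_apply]) <;> rfl
  refine ⟨LinearEquiv.ofBijective AVlin ⟨hinj, hsurj⟩, fun V X Y Z => ?_⟩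
  show AVmap 2 V ![X, Y, Z] = _
  exact AVmap_apply V X Y Z
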